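/- For every integer n > 3, the T_1(n) list of sequences is strongly complete over A = {1, 2, …, n}. -/

import Mathlib

/-- `ρ ∈ [A]_k`: a sequence over `A` of length `k` with pairwise distinct elements. -/
def DistinctSeq (A : Finset ℕ) (k : ℕ) (ρ : List ℕ) : Prop :=
  ρ.length = k ∧ ρ.Nodup ∧ ∀ a ∈ ρ, a ∈ A

/-- `σ` is `k`-complete over `A`: every member of `[A]_k` is a subsequence of `σ`. -/
def IsKComplete (A : Finset ℕ) (k : ℕ) (σ : List ℕ) : Prop :=
  ∀ ρ : List ℕ, DistinctSeq A k ρ → ρ.Sublist σ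

/-- `σ` is a supersequence over `A`: it contains every permutation of `A` as a
subsequence, i.e. it is `|A|`-complete. -/
def IsSupersequence (A : Finset ℕ) (σ : List ℕ) : Prop :=
  IsKComplete A A.card σ

/-- A list of sequences `σ₁, …, σ_n` is forward complete if for every `1 ≤ k ≤ n`,
the concatenation `σ₁σ₂⋯σ_k` is `k`-complete. -/
def ForwardComplete (A : Finset ℕ) (L : List (List ℕ)) : Prop :=
  ∀ k, 1 ≤ k → k ≤ L.length → IsKComplete A k ((L.take k).flatten)

/-- A list of sequences `σ₁, …, σ_n` is backward complete if for every `1 ≤ k ≤ n`,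
the concatenation `σ_{n-k+1}⋯σ_n` is `k`-complete. -/
def BackwardComplete (A : Finset ℕ) (L : List (List ℕ)) : Prop :=
  ∀ k, 1 ≤ k → k ≤ L.length → IsKComplete A k ((L.drop (L.length - k)).flatten)

/-- Strongly complete: both forward and backward complete. -/
def StronglyComplete (A : Finset ℕ) (L : List (List ℕ)) : Prop :=
  ForwardComplete A L ∧ BackwardComplete A L

/-- The `T₁(n)` sequences (1-indexed): `T1 n k` is the `k`-th sequence `σ_k`.
`σ₁ = ⟨1,…,n⟩`, `σ₂ = ⟨1,…,n-1⟩`, for `2 < k < n`,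
`σ_k = σ_{k-2}[-1] · σ_{k-1}[1,-2]`, and `σ_n = σ_{n-2}[-1] · σ_{n-1}[1,-1]`. -/
def T1 (n : ℕ) : ℕ → List ℕ
  | 0 => []
  | 1 => List.range' 1 n
  | 2 => List.range' 1 (n-1)
  | (k+3) =>
      (T1 n (k+1)).getLastD 0 ::
        (if k + 3 = n then T1 n (k+2) else (T1 n (k+2)).dropLast)

/-- The `T₁(n)` list of sequences `σ₁, σ₂, …, σ_n`. -/
def T1List (n : ℕ) : List (List ℕ) := (List.range n).map (fun i => T1 n (i+1))

lemma rev_dropLast (l : List ℕ) : l.dropLast.reverse = l.reverse.tail := by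
  rcases l.eq_nil_or_concat with rfl | ⟨l', a, rfl⟩ <;> simp

/-- Chain condition: every element of `A` missing from the tail of a block is either the
head of that block or the head of the next block. -/
def Good (A : Finset ℕ) : List (List ℕ) → Prop
  | [] => True
  | τ :: L => (∀ a ∈ A, a ∉ τ.tail → τ.head? = some a ∨ (L.headD []).head? = some a) ∧ Good A L

lemma good_sublist (A : Finset ℕ) (L : List (List ℕ)) (hg : Good A L) :
    ∀ ρ : List ℕ, ρ.Nodup → (∀ a ∈ ρ, a ∈ A) → ρ.length = L.length →
      ρ.Sublist L.flatten ∧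
      ∀ b, (L.headD []).head? = some b → b ∉ ρ →
        ρ.Sublist ((L.headD []).tail ++ L.tail.flatten) := by
  induction L with
  | nil =>
    intro ρ _ _ hlen
    rw [List.length_nil, List.length_eq_zero_iff] at hlen
    subst hlen; simp
  | cons τ L' ih =>
    intro ρ hnd hmem hlen
    obtain ⟨hc, hg'⟩ := hg
    cases ρ with
    | nil => simp at hlen
    | cons a ρ' =>
      simp only [List.length_cons, Nat.add_right_cancel_iff] at hlen
      obtain ⟨hanotin, hnd'⟩ := List.nodup_cons.mp hnd
      have hmem' : ∀ x ∈ ρ', x ∈ A := fun x hx => hmem x (List.mem_cons_of_mem _ hx)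
      have ha : a ∈ A := hmem a List.mem_cons_self
      have IH := ih hg' ρ' hnd' hmem' hlen
      have push : (L'.headD []).head? = some a → (a :: ρ').Sublist L'.flatten := by
        intro h
        cases L' with
        | nil => simp at h
        | cons τ₂ L'' =>
          simp only [List.headD_cons] at h
          have h2 := IH.2 a (by simpa using h) hanotin
          simp only [List.headD_cons, List.tail_cons] at h2
          have hτ₂ : τ₂ = a :: τ₂.tail := by
            cases τ₂ with
            | nil => simp at h
            | cons b t => simp_all
          have : (a :: ρ').Sublist (a :: (τ₂.tail ++ L''.flatten)) := h2.cons₂ a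
          rw [hτ₂]
          simpa using this
      constructor
      · by_cases hat : a ∈ τ
        · have : ([a] ++ ρ').Sublist (τ ++ L'.flatten) :=
            List.Sublist.append (List.singleton_sublist.mpr hat) IH.1
          simpa using this
        · rcases hc a ha (fun h => hat (List.mem_of_mem_tail h)) with h | h
          · exact absurd (List.mem_of_mem_head? (by rw [h]; exact rfl)) hat
          · have := push h
            rw [List.flatten_cons]
            exact this.trans (List.sublist_append_right τ _)
      · intro b hb hbρ
        simp only [List.headD_cons, List.tail_cons] at hb ⊢
        by_cases hat : a ∈ τ.tail
        · have : ([a] ++ ρ').Sublist (τ.tail ++ L'.flatten) :=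
            List.Sublist.append (List.singleton_sublist.mpr hat) IH.1
          simpa using this
        · rcases hc a ha hat with h | h
          · rw [h] at hb
            exact absurd (Option.some_injective _ hb ▸ (List.mem_cons_self (a := a) (l := ρ'))) hbρ
          · exact (push h).trans (List.sublist_append_right τ.tail _)

lemma good_of_chain (A : Finset ℕ) (f : ℕ → List ℕ) (s t : ℕ)
    (h : ∀ i, s ≤ i → i < s + t → ∀ a ∈ A, a ∉ (f i).tail →
        (f i).head? = some a ∨ (i + 1 < s + t ∧ (f (i + 1)).head? = some a)) :
    Good A ((List.range' s t).map f) := by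
  induction t generalizing s with
  | zero => trivial
  | succ t iht =>
    rw [List.range'_succ, List.map_cons]
    refine ⟨?_, ?_⟩
    · intro a ha hat
      rcases h s le_rfl (by omega) a ha hat with h1 | ⟨h1, h2⟩
      · exact Or.inl h1
      · refine Or.inr ?_
        cases t with
        | zero => omega
        | succ t' => rw [List.range'_succ, List.map_cons, List.headD_cons]; exact h2
    · exact iht (s + 1) (fun i hi hi2 a ha hat => by
        rcases h i (by omega) (by omega) a ha hat with h1 | ⟨h1, h2⟩
        · exact Or.inl h1
        · exact Or.inr ⟨by omega, h2⟩)

lemma dropLast_range' (s t : ℕ) : (List.range' s t).dropLast = List.range' s (t - 1) := by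
  cases t with
  | zero => simp
  | succ t => rw [List.range'_1_concat, List.dropLast_concat]; simp

lemma getLastD_range' (s t : ℕ) (h : 1 ≤ t) (d : ℕ) :
    (List.range' s t).getLastD d = s + t - 1 := by
  obtain ⟨t', rfl⟩ : ∃ t', t = t' + 1 := ⟨t - 1, by omega⟩
  rw [List.range'_1_concat, List.getLastD_concat]
  omega

lemma getLastD_append' (x y : List ℕ) (d : ℕ) (h : y ≠ []) :
    (x ++ y).getLastD d = y.getLastD d := by
  rcases y.eq_nil_or_concat with rfl | ⟨y', a, rfl⟩
  · exact absurd rfl h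
  · rw [List.concat_eq_append, ← List.append_assoc, List.getLastD_concat, List.getLastD_concat]

lemma T1_one (n : ℕ) : T1 n 1 = List.range' 1 n := rfl
lemma T1_two (n : ℕ) : T1 n 2 = List.range' 1 (n - 1) := rfl

lemma range'_ne_nil (s t : ℕ) (h : 1 ≤ t) : List.range' s t ≠ [] := by
  simp only [ne_eq, List.range'_eq_nil_iff]
  omega

lemma T1_mid (n : ℕ) (hn : 4 ≤ n) :
    ∀ j, j + 3 ≤ n - 1 → T1 n (j + 3) = List.range' (n - j) (j + 1) ++ List.range' 1 (n - j - 2) := by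
  intro j
  induction j using Nat.strong_induction_on with
  | _ j ih =>
    match j with
    | 0 =>
      intro _
      rw [show (0:ℕ)+3 = 0+3 from rfl, T1]
      rw [if_neg (by omega), T1_one, T1_two, dropLast_range',
        getLastD_range' 1 n (by omega)]
      conv_rhs => rw [List.range'_succ]
      simp only [List.range'_zero, List.nil_append, List.cons_append]
      congr 1 <;> first | omega | (congr 1 <;> first | omega | (congr 1 <;> omega))
    | 1 =>
      intro h1
      rw [show (1:ℕ)+3 = 1+3 from rfl, T1]
      rw [if_neg (by omega), T1_two, ih 0 (by omega) (by omega),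
        getLastD_range' 1 (n-1) (by omega),
        List.dropLast_append_of_ne_nil (l' := List.range' (n - 0) (0 + 1))
          (range'_ne_nil 1 (n - 0 - 2) (by omega)),
        dropLast_range']
      conv_rhs => rw [List.range'_succ]
      simp only [List.range'_zero, List.nil_append, List.cons_append]
      congr 1 <;> first | omega | (congr 1 <;> first | omega | (congr 1 <;> omega))
    | (j+2) =>
      intro hle
      rw [show j+2+3 = (j+2)+3 from rfl, T1]
      rw [if_neg (by omega), ih j (by omega) (by omega), ih (j+1) (by omega) (by omega),
        getLastD_append' (List.range' (n - j) (j + 1)) (List.range' 1 (n - j - 2)) 0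
          (range'_ne_nil 1 (n - j - 2) (by omega)),
        getLastD_range' 1 (n - j - 2) (by omega),
        List.dropLast_append_of_ne_nil (l' := List.range' (n - (j+1)) (j + 1 + 1))
          (range'_ne_nil 1 (n - (j+1) - 2) (by omega)),
        dropLast_range']
      conv_rhs => rw [List.range'_succ]
      simp only [List.range'_zero, List.nil_append, List.cons_append]
      congr 1 <;> first | omega | (congr 1 <;> first | omega | (congr 1 <;> omega))

lemma T1_top (n : ℕ) (hn : 4 ≤ n) :
    T1 n n = List.range' 3 (n - 2) ++ List.range' 1 2 := by
  obtain ⟨m, rfl⟩ : ∃ m, n = m + 4 := ⟨n - 4, by omega⟩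
  rw [show m + 4 = (m+1)+3 from rfl, T1, if_pos rfl]
  rcases Nat.eq_zero_or_pos m with rfl | hm
  · decide
  · rw [show m+1+1 = (m-1)+3 from by omega, show m+1+2 = m+3 from rfl,
      T1_mid _ (by omega) (m-1) (by omega), T1_mid _ (by omega) m (by omega),
      getLastD_append' (List.range' (m+1+3 - (m-1)) ((m-1) + 1)) (List.range' 1 (m+1+3 - (m-1) - 2)) 0
        (range'_ne_nil 1 (m+1+3 - (m-1) - 2) (by omega)),
      getLastD_range' 1 (m + 1 + 3 - (m-1) - 2) (by omega),
      show m+1+3-2 = (m+1)+1 from by omega]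
    conv_rhs => rw [List.range'_succ]
    simp only [List.range'_zero, List.nil_append, List.cons_append]
    congr 1 <;> first | omega | (congr 1 <;> first | omega | (congr 1 <;> omega))

lemma getLast?_range' (s t : ℕ) (h : 1 ≤ t) :
    (List.range' s t).getLast? = some (s + t - 1) := by
  obtain ⟨t', rfl⟩ : ∃ t', t = t' + 1 := ⟨t - 1, by omega⟩
  rw [List.range'_1_concat, List.getLast?_concat]
  exact congrArg some (by omega)

lemma getLast?_append_range' (x : List ℕ) (s t : ℕ) (h : 1 ≤ t) :
    (x ++ List.range' s t).getLast? = some (s + t - 1) := by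
  rw [List.getLast?_append, getLast?_range' s t h]
  rfl

lemma head?_range'_append (x : List ℕ) (s t : ℕ) (h : 1 ≤ t) :
    (List.range' s t ++ x).head? = some s := by
  obtain ⟨t', rfl⟩ : ∃ t', t = t' + 1 := ⟨t - 1, by omega⟩
  rw [List.range'_succ]
  rfl

lemma backward_chain (n : ℕ) (hn : 4 ≤ n) (i : ℕ) (hi : i < n) (a : ℕ)
    (ha1 : 1 ≤ a) (ha2 : a ≤ n) (hat : a ∉ (T1 n (i + 1)).tail) :
    (T1 n (i + 1)).head? = some a ∨ (i + 1 < n ∧ (T1 n (i + 2)).head? = some a) := by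
  rcases Nat.lt_or_ge i 2 with h2 | h2
  · interval_cases i
    · -- σ₁
      left
      rw [T1_one, show n = (n-1)+1 from by omega, List.range'_succ] at hat ⊢
      simp only [List.tail_cons, List.mem_range'_1] at hat
      have : a = 1 := by omega
      subst this
      rfl
    · -- σ₂
      rw [T1_two, show n - 1 = (n-2)+1 from by omega, List.range'_succ] at hat
      simp only [List.tail_cons, List.mem_range'_1] at hat
      rcases show a = 1 ∨ a = n from by omega with rfl | ha
      · left
        rw [T1_two, show n - 1 = (n-2)+1 from by omega, List.range'_succ]
        rfl
      · right
        refine ⟨by omega, ?_⟩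
        rw [show (1:ℕ)+2 = 0+3 from rfl, T1_mid n hn 0 (by omega)]
        rw [head?_range'_append _ _ _ (by omega)]
        congr 1
        omega
  · by_cases htop : i + 1 = n
    · left
      rw [htop, T1_top n hn, show n - 2 = (n-3)+1 from by omega, List.range'_succ] at hat ⊢
      simp only [List.cons_append, List.tail_cons, List.mem_append, List.mem_range'_1] at hat
      have : a = 3 := by omega
      subst this
      rfl
    · -- mid: 2 ≤ i, i + 2 ≤ n
      rw [show i+1 = (i-2)+3 from by omega, T1_mid n hn (i-2) (by omega),
        show (i-2)+1 = (i-2)+1 from rfl, List.range'_succ, List.cons_append] at hat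
      simp only [List.tail_cons, List.mem_append, List.mem_range'_1] at hat
      rcases show a = n - i + 2 ∨ a = n - i + 1 from by omega with rfl | rfl
      · left
        rw [show i+1 = (i-2)+3 from by omega, T1_mid n hn (i-2) (by omega),
          head?_range'_append _ _ _ (by omega)]
        congr 1
        omega
      · right
        refine ⟨by omega, ?_⟩
        by_cases htop2 : i + 2 = n
        · rw [htop2, T1_top n hn, head?_range'_append _ _ _ (by omega)]
          congr 1
          omega
        · rw [show i+2 = (i-1)+3 from by omega, T1_mid n hn (i-1) (by omega),
            head?_range'_append _ _ _ (by omega)]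
          congr 1
          omega

lemma forward_chain (n : ℕ) (hn : 4 ≤ n) (m : ℕ) (hm1 : 1 ≤ m) (hm2 : m ≤ n) (a : ℕ)
    (ha1 : 1 ≤ a) (ha2 : a ≤ n) (hat : a ∉ (T1 n m).dropLast) :
    (T1 n m).getLast? = some a ∨ (2 ≤ m ∧ (T1 n (m - 1)).getLast? = some a) := by
  rcases Nat.lt_or_ge m 3 with h3 | h3
  · interval_cases m
    · -- σ₁
      left
      rw [T1_one, dropLast_range'] at hat
      simp only [List.mem_range'_1] at hat
      rw [T1_one, getLast?_range' _ _ (by omega)]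
      congr 1
      omega
    · -- σ₂
      rw [T1_two, dropLast_range'] at hat
      simp only [List.mem_range'_1] at hat
      rcases show a = n - 1 ∨ a = n from by omega with rfl | ha
      · left
        rw [T1_two, getLast?_range' _ _ (by omega)]
        congr 1
        omega
      · right
        refine ⟨le_rfl, ?_⟩
        rw [show (2:ℕ)-1 = 1 from rfl, T1_one, getLast?_range' _ _ (by omega)]
        congr 1
        omega
  · by_cases htop : m = n
    · left
      rw [htop, T1_top n hn,
        List.dropLast_append_of_ne_nil (range'_ne_nil 1 2 (by omega)),
        dropLast_range'] at hat
      simp only [List.mem_append, List.mem_range'_1] at hat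
      rw [htop, T1_top n hn, getLast?_append_range' _ _ _ (by omega)]
      have : a = 2 := by omega
      subst this
      rfl
    · -- mid: 3 ≤ m ≤ n - 1
      rw [show m = (m-3)+3 from by omega, T1_mid n hn (m-3) (by omega),
        List.dropLast_append_of_ne_nil (range'_ne_nil 1 (n-(m-3)-2) (by omega)),
        dropLast_range'] at hat
      simp only [List.mem_append, List.mem_range'_1] at hat
      rcases show a = n - m + 3 - 2 ∨ a = n - m + 2 from by omega with rfl | rfl
      · left
        rw [show m = (m-3)+3 from by omega, T1_mid n hn (m-3) (by omega),
          getLast?_append_range' _ _ _ (by omega)]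
        congr 1
        omega
      · right
        refine ⟨by omega, ?_⟩
        rcases Nat.lt_or_ge m 4 with h4 | h4
        · have : m = 3 := by omega
          subst this
          rw [show (3:ℕ)-1 = 2 from rfl, T1_two, getLast?_range' _ _ (by omega)]
          congr 1
          omega
        · rw [show m-1 = (m-4)+3 from by omega, T1_mid n hn (m-4) (by omega),
            getLast?_append_range' _ _ _ (by omega)]
          congr 1
          omega

lemma drop_range'' (m s t : ℕ) : (List.range' s t).drop m = List.range' (s + m) (t - m) := by
  induction m generalizing s t with
  | zero => simp
  | succ m ih =>
    cases t with
    | zero => simp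
    | succ t =>
      rw [List.range'_succ, List.drop_succ_cons, ih]
      congr 1 <;> omega

lemma take_range'' (m s t : ℕ) : (List.range' s t).take m = List.range' s (min m t) := by
  induction m generalizing s t with
  | zero => simp
  | succ m ih =>
    cases t with
    | zero => simp
    | succ t =>
      rw [List.range'_succ, List.take_succ_cons, ih, ← List.range'_succ]
      congr 1
      omega

lemma reverse_map_range' (h : ℕ → List ℕ) (k : ℕ) :
    (List.map h (List.range' 0 k)).reverse
      = List.map (fun i => h (k - 1 - i)) (List.range' 0 k) := by
  apply List.ext_getElem
  · simp
  · intro i h1 h2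
    simp only [List.getElem_reverse, List.getElem_map, List.getElem_range', List.length_map,
      List.length_range'] at h1 h2 ⊢
    congr 1
    omega


/-- **Theorem 8.** For every integer `n > 3`, the `T₁(n)` list of
sequences is strongly complete over `A = {1,…,n}`. -/
theorem T1List_stronglyComplete (n : ℕ) (hn : 3 < n) :
    StronglyComplete (Finset.Icc 1 n) (T1List n) := by
  have hn4 : 4 ≤ n := hn
  have hlenL : (T1List n).length = n := by simp [T1List]
  have hTL : T1List n = List.map (fun i => T1 n (i+1)) (List.range' 0 n) := by
    rw [T1List, List.range_eq_range']
  constructor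
  · -- Forward
    intro k hk1 hk2 ρ hρ
    obtain ⟨hlen, hnd, hmem⟩ := hρ
    rw [hlenL] at hk2
    rw [← List.reverse_sublist, List.reverse_flatten]
    have htake : (T1List n).take k = List.map (fun i => T1 n (i+1)) (List.range' 0 k) := by
      rw [hTL, ← List.map_take, take_range'', Nat.min_eq_left hk2]
    have hrev : (((T1List n).take k).map List.reverse).reverse
        = List.map (fun i => (T1 n (k - 1 - i + 1)).reverse) (List.range' 0 k) := by
      rw [htake, List.map_map, reverse_map_range']
      rfl
    rw [hrev]
    have hg : Good (Finset.Icc 1 n)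
        (List.map (fun i => (T1 n (k - 1 - i + 1)).reverse) (List.range' 0 k)) := by
      refine good_of_chain _ _ 0 k ?_
      intro i hi0 hik a haA hat
      rw [Nat.zero_add] at hik
      rw [Finset.mem_Icc] at haA
      rw [← rev_dropLast, List.mem_reverse] at hat
      rcases forward_chain n hn4 (k - 1 - i + 1) (by omega) (by omega) a haA.1 haA.2 hat
        with h | ⟨h1, h2⟩
      · left
        rw [List.head?_reverse]
        exact h
      · right
        refine ⟨by omega, ?_⟩
        rw [List.head?_reverse]
        have he : k - 1 - (i + 1) + 1 = k - 1 - i + 1 - 1 := by omega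
        rw [he]
        exact h2
    have := (good_sublist (Finset.Icc 1 n) _ hg ρ.reverse (by simpa using hnd)
      (by intro a ha; exact hmem a (List.mem_reverse.mp ha))
      (by simp [hlen])).1
    exact this
  · -- Backward
    intro k hk1 hk2 ρ hρ
    obtain ⟨hlen, hnd, hmem⟩ := hρ
    rw [hlenL] at hk2 ⊢
    have hdrop : (T1List n).drop (n - k)
        = List.map (fun i => T1 n (i+1)) (List.range' (n - k) k) := by
      rw [hTL, ← List.map_drop, drop_range'']
      congr 1
      congr 1 <;> omega
    rw [hdrop]
    have hg : Good (Finset.Icc 1 n)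
        (List.map (fun i => T1 n (i+1)) (List.range' (n - k) k)) := by
      refine good_of_chain _ _ (n - k) k ?_
      intro i hi1 hi2 a haA hat
      rw [Finset.mem_Icc] at haA
      rcases backward_chain n hn4 i (by omega) a haA.1 haA.2 hat with h | ⟨h1, h2⟩
      · exact Or.inl h
      · exact Or.inr ⟨by omega, h2⟩
    exact (good_sublist (Finset.Icc 1 n) _ hg ρ hnd hmem (by simp [hlen])).1
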